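/- arXiv:2604.20724 — 2 statements merged into one kernel-verified Lean document; each statement's English description precedes it below -/
import Mathlib

section
/- For every bus k ∈ B, the total complex power injected from bus k into its incident branches equals the admittance-matrix form, i.e. Σ_{s ∈ S, from(s)=k} U(k)·conj(J_from(s)) + Σ_{s ∈ S, to(s)=k} U(k)·conj(J_to(s)) = U(k) · Σ_{i ∈ B} conj(Y(k,i)) · conj(U(i)). -/
/-- For every bus `k ∈ B`, the total complex power injected from bus `k`
into its incident branches equals the admittance-matrix form:
`Σ_{s, from(s)=k} U(k)·conj(J_from(s)) + Σ_{s, toB(s)=k} U(k)·conj(J_to(s))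
  = U(k) · Σ_{i ∈ B} conj(Y(k,i)) · conj(U(i))`. -/
theorem power_injection_admittance_form
    {B S : Type*} [Fintype B] [Fintype S] [DecidableEq B]
    (fr toB : S → B) (hdist : ∀ s, fr s ≠ toB s)
    (Ys Yp n : S → ℂ) (hn : ∀ s, n s ≠ 0)
    (U : B → ℂ)
    (Jfrom Jto : S → ℂ)
    (hJfrom : ∀ s, Jfrom s =
      Ys s * (U (fr s) - U (toB s) / n s) + Yp s / 2 * U (fr s))
    (hJto : ∀ s, Jto s =
      (1 / (starRingEnd ℂ) (n s)) *
        (Ys s * (U (toB s) / n s - U (fr s)) + Yp s / 2 * (U (toB s) / n s)))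
    (Y : B → B → ℂ)
    (hYoff : ∀ k i, k ≠ i → Y k i =
      -(∑ s ∈ Finset.univ.filter (fun s => fr s = k ∧ toB s = i), Ys s / n s)
      - ∑ s ∈ Finset.univ.filter (fun s => fr s = i ∧ toB s = k),
          Ys s / (starRingEnd ℂ) (n s))
    (hYdiag : ∀ k, Y k k =
      ∑ s ∈ Finset.univ.filter (fun s => fr s = k), (Ys s + Yp s / 2)
      + ∑ s ∈ Finset.univ.filter (fun s => toB s = k),
          (Ys s + Yp s / 2) / ((‖n s‖ : ℝ) : ℂ) ^ 2)
    (k : B) :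
    (∑ s ∈ Finset.univ.filter (fun s => fr s = k), U k * (starRingEnd ℂ) (Jfrom s))
      + ∑ s ∈ Finset.univ.filter (fun s => toB s = k), U k * (starRingEnd ℂ) (Jto s)
    = U k * ∑ i, (starRingEnd ℂ) (Y k i) * (starRingEnd ℂ) (U i) := by
  classical
  set C := starRingEnd ℂ with hC
  have hn' : ∀ s, C (n s) ≠ 0 := fun s => by simpa [hC] using hn s
  -- fiber lemmas
  have fib1 : ∀ g : S → ℂ,
      ∑ i ∈ Finset.univ.erase k,
        ∑ s ∈ Finset.univ.filter (fun s => fr s = k ∧ toB s = i), g s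
      = ∑ s ∈ Finset.univ.filter (fun s => fr s = k), g s := by
    intro g
    rw [Finset.sum_erase _ (by
      apply Finset.sum_eq_zero
      intro s hs
      rw [Finset.mem_filter] at hs
      exact absurd (hs.2.1.trans hs.2.2.symm) (hdist s))]
    rw [← Finset.sum_fiberwise_of_maps_to (g := toB)
      (t := (Finset.univ : Finset B)) (fun x _ => Finset.mem_univ _) g]
    refine Finset.sum_congr rfl fun i _ => Finset.sum_congr ?_ fun _ _ => rfl
    ext s
    simp [and_comm]
  have fib2 : ∀ g : S → ℂ,
      ∑ i ∈ Finset.univ.erase k,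
        ∑ s ∈ Finset.univ.filter (fun s => fr s = i ∧ toB s = k), g s
      = ∑ s ∈ Finset.univ.filter (fun s => toB s = k), g s := by
    intro g
    rw [Finset.sum_erase _ (by
      apply Finset.sum_eq_zero
      intro s hs
      rw [Finset.mem_filter] at hs
      exact absurd (hs.2.1.trans hs.2.2.symm) (hdist s))]
    rw [← Finset.sum_fiberwise_of_maps_to (g := fr)
      (t := (Finset.univ : Finset B)) (fun x _ => Finset.mem_univ _) g]
    refine Finset.sum_congr rfl fun i _ => Finset.sum_congr ?_ fun _ _ => rfl
    ext s
    simp [and_comm]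
  -- per-branch identities
  have hfrom : ∀ s, fr s = k →
      U k * C (Jfrom s)
        = U k * C (Ys s + Yp s / 2) * C (U k)
          - U k * C (Ys s / n s) * C (U (toB s)) := by
    intro s hs
    rw [hJfrom s, hs]
    simp only [hC, map_add, map_mul, map_sub, map_div₀, map_ofNat]
    field_simp
    ring
  have hto : ∀ s, toB s = k →
      U k * C (Jto s)
        = U k * C ((Ys s + Yp s / 2) / ((‖n s‖ : ℝ) : ℂ) ^ 2) * C (U k)
          - U k * C (Ys s / C (n s)) * C (U (fr s)) := by
    intro s hs
    have h2 : ((‖n s‖ : ℝ) : ℂ) ^ 2 = n s * C (n s) := by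
      calc ((‖n s‖ : ℝ) : ℂ) ^ 2
          = ((‖n s‖ ^ 2 : ℝ) : ℂ) := by push_cast; ring
        _ = (Complex.normSq (n s) : ℂ) := by rw [Complex.sq_norm]
        _ = n s * C (n s) := (Complex.mul_conj _).symm
    rw [hJto s, hs, h2]
    simp only [hC, map_add, map_mul, map_sub, map_div₀, map_ofNat, map_one,
      Complex.conj_conj]
    field_simp
    ring
  -- rewrite the left-hand side
  rw [Finset.sum_congr rfl (fun s hs => hfrom s (Finset.mem_filter.mp hs).2),
      Finset.sum_congr rfl (fun s hs => hto s (Finset.mem_filter.mp hs).2),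
      Finset.sum_sub_distrib, Finset.sum_sub_distrib]
  -- rewrite the right-hand side
  rw [Finset.mul_sum,
      ← Finset.add_sum_erase Finset.univ
        (fun i => U k * (C (Y k i) * C (U i))) (Finset.mem_univ k)]
  have hoff : ∑ i ∈ Finset.univ.erase k, U k * (C (Y k i) * C (U i))
      = -(∑ s ∈ Finset.univ.filter (fun s => fr s = k),
            U k * C (Ys s / n s) * C (U (toB s)))
        - ∑ s ∈ Finset.univ.filter (fun s => toB s = k),
            U k * C (Ys s / C (n s)) * C (U (fr s)) := by
    have step : ∀ i ∈ Finset.univ.erase k, U k * (C (Y k i) * C (U i))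
        = -(∑ s ∈ Finset.univ.filter (fun s => fr s = k ∧ toB s = i),
              U k * C (Ys s / n s) * C (U (toB s)))
          - ∑ s ∈ Finset.univ.filter (fun s => fr s = i ∧ toB s = k),
              U k * C (Ys s / C (n s)) * C (U (fr s)) := by
      intro i hi
      have hki : k ≠ i := (Finset.mem_erase.mp hi).1.symm
      rw [hYoff k i hki]
      simp only [hC, map_sub, map_neg, map_sum]
      rw [sub_mul, neg_mul, mul_sub, mul_neg, Finset.sum_mul, Finset.sum_mul,
        Finset.mul_sum, Finset.mul_sum]
      congr 1
      · congr 1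
        refine Finset.sum_congr rfl fun s hs => ?_
        obtain ⟨-, -, hto'⟩ := Finset.mem_filter.mp hs
        rw [hto']; ring
      · refine Finset.sum_congr rfl fun s hs => ?_
        obtain ⟨-, hfr', -⟩ := Finset.mem_filter.mp hs
        rw [hfr']; ring
    rw [Finset.sum_congr rfl step, Finset.sum_sub_distrib, Finset.sum_neg_distrib,
      fib1, fib2]
  have hdiag : U k * (C (Y k k) * C (U k))
      = (∑ s ∈ Finset.univ.filter (fun s => fr s = k),
            U k * C (Ys s + Yp s / 2) * C (U k))
        + ∑ s ∈ Finset.univ.filter (fun s => toB s = k),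
            U k * C ((Ys s + Yp s / 2) / ((‖n s‖ : ℝ) : ℂ) ^ 2) * C (U k) := by
    rw [hYdiag k]
    simp only [hC, map_add, map_sum]
    rw [add_mul, mul_add, Finset.sum_mul, Finset.sum_mul, Finset.mul_sum,
      Finset.mul_sum]
    exact congrArg₂ _ (Finset.sum_congr rfl fun s _ => by ring)
      (Finset.sum_congr rfl fun s _ => by ring)
  rw [hoff, hdiag]
  ring
end

section
/- For every bus k ∈ B, the total complex current injected from bus k into its incident branches equals the admittance-matrix form, i.e. Σ_{s ∈ S, from(s)=k} J_from(s) + Σ_{s ∈ S, to(s)=k} J_to(s) = Σ_{i ∈ B} Y(k,i) · U(i). -/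
/-- For every bus `k ∈ B`, the total complex current injected from bus `k`
into its incident branches equals the admittance-matrix form:
`Σ_{s, from(s)=k} J_from(s) + Σ_{s, toB(s)=k} J_to(s) = Σ_{i ∈ B} Y(k,i)·U(i)`. -/
theorem current_injection_admittance_form
    {B S : Type*} [Fintype B] [Fintype S] [DecidableEq B]
    (fr toB : S → B) (hdist : ∀ s, fr s ≠ toB s)
    (Ys Yp n : S → ℂ) (hn : ∀ s, n s ≠ 0)
    (U : B → ℂ)
    (Jfrom Jto : S → ℂ)
    (hJfrom : ∀ s, Jfrom s =
      Ys s * (U (fr s) - U (toB s) / n s) + Yp s / 2 * U (fr s))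
    (hJto : ∀ s, Jto s =
      (1 / (starRingEnd ℂ) (n s)) *
        (Ys s * (U (toB s) / n s - U (fr s)) + Yp s / 2 * (U (toB s) / n s)))
    (Y : B → B → ℂ)
    (hYoff : ∀ k i, k ≠ i → Y k i =
      -(∑ s ∈ Finset.univ.filter (fun s => fr s = k ∧ toB s = i), Ys s / n s)
      - ∑ s ∈ Finset.univ.filter (fun s => fr s = i ∧ toB s = k),
          Ys s / (starRingEnd ℂ) (n s))
    (hYdiag : ∀ k, Y k k =
      ∑ s ∈ Finset.univ.filter (fun s => fr s = k), (Ys s + Yp s / 2)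
      + ∑ s ∈ Finset.univ.filter (fun s => toB s = k),
          (Ys s + Yp s / 2) / ((‖n s‖ : ℝ) : ℂ) ^ 2)
    (k : B) :
    (∑ s ∈ Finset.univ.filter (fun s => fr s = k), Jfrom s)
      + ∑ s ∈ Finset.univ.filter (fun s => toB s = k), Jto s
    = ∑ i, Y k i * U i := by
  classical
  have habs : ∀ s : S, ((‖n s‖ : ℝ) : ℂ) ^ 2 = n s * (starRingEnd ℂ) (n s) := by
    intro s
    rw [← Complex.ofReal_pow, Complex.sq_norm, Complex.mul_conj]
  -- split off i = k
  rw [← Finset.sum_erase_add _ _ (Finset.mem_univ k)]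
  have hoff : ∑ i ∈ Finset.univ.erase k, Y k i * U i
      = -∑ s ∈ Finset.univ.filter (fun s => fr s = k), Ys s / n s * U (toB s)
        - ∑ s ∈ Finset.univ.filter (fun s => toB s = k),
            Ys s / (starRingEnd ℂ) (n s) * U (fr s) := by
    have step1 : ∀ i ∈ Finset.univ.erase k, Y k i * U i
        = -(∑ s ∈ Finset.univ.filter (fun s => fr s = k ∧ toB s = i), Ys s / n s * U (toB s))
          - ∑ s ∈ Finset.univ.filter (fun s => fr s = i ∧ toB s = k),
              Ys s / (starRingEnd ℂ) (n s) * U (fr s) := by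
      intro i hi
      have hik : k ≠ i := (Finset.ne_of_mem_erase hi).symm
      rw [hYoff k i hik, sub_mul, neg_mul, Finset.sum_mul, Finset.sum_mul]
      congr 1
      · congr 1
        refine Finset.sum_congr rfl fun s hs => ?_
        rw [(Finset.mem_filter.mp hs).2.2]
      · refine Finset.sum_congr rfl fun s hs => ?_
        rw [(Finset.mem_filter.mp hs).2.1]
    rw [Finset.sum_congr rfl step1, Finset.sum_sub_distrib, Finset.sum_neg_distrib]
    congr 1
    · congr 1
      have := Finset.sum_fiberwise_of_maps_to
        (s := Finset.univ.filter (fun s => fr s = k)) (t := Finset.univ.erase k)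
        (g := toB)
        (fun s hs => Finset.mem_erase.mpr
          ⟨fun h => hdist s ((Finset.mem_filter.mp hs).2.trans h.symm), Finset.mem_univ _⟩)
        (fun s => Ys s / n s * U (toB s))
      rw [← this]
      refine Finset.sum_congr rfl fun i _ => ?_
      congr 1
      rw [Finset.filter_filter]
    · have := Finset.sum_fiberwise_of_maps_to
        (s := Finset.univ.filter (fun s => toB s = k)) (t := Finset.univ.erase k)
        (g := fr)
        (fun s hs => Finset.mem_erase.mpr
          ⟨fun h => hdist s (h.trans (Finset.mem_filter.mp hs).2.symm), Finset.mem_univ _⟩)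
        (fun s => Ys s / (starRingEnd ℂ) (n s) * U (fr s))
      rw [← this]
      refine Finset.sum_congr rfl fun i _ => ?_
      congr 1
      rw [Finset.filter_filter]
      refine Finset.filter_congr fun s _ => ?_
      tauto
  simp only [hJfrom, hJto]
  have hL1 : ∑ s ∈ Finset.univ.filter (fun s => fr s = k),
      (Ys s * (U (fr s) - U (toB s) / n s) + Yp s / 2 * U (fr s))
      = ∑ s ∈ Finset.univ.filter (fun s => fr s = k),
      ((Ys s + Yp s / 2) * U k - Ys s / n s * U (toB s)) := by
    refine Finset.sum_congr rfl fun s hs => ?_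
    have h : fr s = k := (Finset.mem_filter.mp hs).2
    rw [h]; field_simp [hn s]; ring
  have hL2 : ∑ s ∈ Finset.univ.filter (fun s => toB s = k),
      ((1 / (starRingEnd ℂ) (n s)) *
        (Ys s * (U (toB s) / n s - U (fr s)) + Yp s / 2 * (U (toB s) / n s)))
      = ∑ s ∈ Finset.univ.filter (fun s => toB s = k),
      ((Ys s + Yp s / 2) / ((‖n s‖ : ℝ) : ℂ) ^ 2 * U k
        - Ys s / (starRingEnd ℂ) (n s) * U (fr s)) := by
    refine Finset.sum_congr rfl fun s hs => ?_
    have h : toB s = k := (Finset.mem_filter.mp hs).2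
    have hcn : (starRingEnd ℂ) (n s) ≠ 0 := by
      simpa using hn s
    rw [h, habs s]
    simp only [div_eq_mul_inv, mul_inv]
    ring
  rw [hL1, hL2, hoff, hYdiag, add_mul, Finset.sum_mul, Finset.sum_mul,
      Finset.sum_sub_distrib, Finset.sum_sub_distrib]
  ring
end
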